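/- Let δ be an expansion function and φ a reduction function on L, let p ∈ L be a proper element and b ∈ L. Then the following three statements are equivalent: (1) b is φ-δ-primary to p; (2) either (p : b) ≤ δ(p) or (p : b) = (φ(p) : b); (3) for every compact element r ∈ L, r·b ≤ p and r·b ≰ φ(p) imply r ≤ δ(p). -/

import Mathlib

/-- The Mathlib (December 2024) definition of a compact element of a complete lattice,
restored here because Mathlib's `IsCompactElement` now has another definition. -/
def CompleteLattice.IsCompactElement {α : Type*} [CompleteLattice α] (k : α) : Prop :=
  ∀ s : Set α, k ≤ sSup s → ∃ t : Finset α, ↑t ⊆ s ∧ k ≤ t.sup id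

/-- A multiplicative lattice: a complete lattice with a commutative, associative
multiplication that distributes over arbitrary joins and whose greatest element `1`
is a multiplicative identity.  We also bundle the standing assumptions of the paper:
`L` is compactly generated, `1` is compact, and products of compact elements are
compact. -/
class MultiplicativeLattice (L : Type*) extends CompleteLattice L, CommMonoid L where
  mul_sSup : ∀ (a : L) (s : Set L), a * sSup s = ⨆ x ∈ s, a * x
  one_eq_top : (1 : L) = ⊤
  compactly_generated : ∀ x : L, ∃ s : Set L,
    (∀ y ∈ s, CompleteLattice.IsCompactElement y) ∧ sSup s = x
  compact_one : CompleteLattice.IsCompactElement (1 : L)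
  compact_mul : ∀ a b : L, CompleteLattice.IsCompactElement a →
    CompleteLattice.IsCompactElement b → CompleteLattice.IsCompactElement (a * b)

variable {L : Type*}

/-- An expansion function on `L`. -/
def IsExpansion [CompleteLattice L] (δ : L → L) : Prop :=
  (∀ a, a ≤ δ a) ∧ ∀ a b : L, a ≤ b → δ a ≤ δ b

/-- A reduction function on `L`. -/
def IsReduction [CompleteLattice L] (φ : L → L) : Prop :=
  ∀ a, φ a ≤ a

/-- `b` is `φ`-`δ`-primary to `p`. -/
def PhiDeltaPrimaryTo [MultiplicativeLattice L] (φ δ : L → L) (b p : L) : Prop :=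
  ∀ x : L, x * b ≤ p → ¬ x * b ≤ φ p → x ≤ δ p

/-- `b` is `δ`-primary to `p`. -/
def DeltaPrimaryTo [MultiplicativeLattice L] (δ : L → L) (b p : L) : Prop :=
  ∀ x : L, x * b ≤ p → x ≤ δ p

/-- `b` is `φ`-prime to `p`. -/
def PhiPrimeTo [MultiplicativeLattice L] (φ : L → L) (b p : L) : Prop :=
  ∀ x : L, x * b ≤ p → ¬ x * b ≤ φ p → x ≤ p

/-- The radical `√q`: the join of all compact elements some positive power of which
lies below `q`.  This is the expansion function `δ₁`. -/
def mlRadical [MultiplicativeLattice L] (q : L) : L :=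
  sSup {x : L | CompleteLattice.IsCompactElement x ∧ ∃ n : ℕ, 0 < n ∧ x ^ n ≤ q}

/-- The function `φ_ω(q) = ⋀_{n ≥ 1} qⁿ`. -/
def phiOmega [MultiplicativeLattice L] (q : L) : L := ⨅ n : ℕ, q ^ (n + 1)

/-- The mlResidual `(a : c)`, the join of all `x` with `x * c ≤ a`. -/
def mlResidual [MultiplicativeLattice L] (a c : L) : L := sSup {x : L | x * c ≤ a}

section Aux
variable [MultiplicativeLattice L]

lemma ml_sSup_mul (s : Set L) (b : L) : sSup s * b = ⨆ x ∈ s, x * b := by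
  rw [mul_comm, MultiplicativeLattice.mul_sSup]
  simp [mul_comm]

lemma ml_sup_mul (x y b : L) : (x ⊔ y) * b = x * b ⊔ y * b := by
  rw [← sSup_pair, ml_sSup_mul, iSup_pair]

lemma ml_mul_mono_left {x y : L} (h : x ≤ y) (b : L) : x * b ≤ y * b := by
  have : x ⊔ y = y := sup_eq_right.mpr h
  calc x * b ≤ x * b ⊔ y * b := le_sup_left
    _ = (x ⊔ y) * b := (ml_sup_mul x y b).symm
    _ = y * b := by rw [this]

lemma ml_compact_sup {α : Type*} [CompleteLattice α] {x y : α}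
    (hx : CompleteLattice.IsCompactElement x) (hy : CompleteLattice.IsCompactElement y) :
    CompleteLattice.IsCompactElement (x ⊔ y) := by
  classical
  intro s hs
  obtain ⟨t1, ht1, h1⟩ := hx s (le_trans le_sup_left hs)
  obtain ⟨t2, ht2, h2⟩ := hy s (le_trans le_sup_right hs)
  refine ⟨t1 ∪ t2, ?_, ?_⟩
  · rw [Finset.coe_union]; exact Set.union_subset ht1 ht2
  · rw [Finset.sup_union]; exact sup_le_sup h1 h2

lemma ml_le_residual_iff (p b x : L) : x ≤ mlResidual p b ↔ x * b ≤ p := by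
  constructor
  · intro h
    calc x * b ≤ mlResidual p b * b := ml_mul_mono_left h b
      _ = ⨆ y ∈ {y : L | y * b ≤ p}, y * b := ml_sSup_mul _ b
      _ ≤ p := by
          apply iSup_le; intro y; apply iSup_le; intro hy; exact hy
  · intro h; exact le_sSup h

end Aux

theorem phiDeltaPrimary_characterizations [MultiplicativeLattice L]
    (δ φ : L → L) (hδ : IsExpansion δ) (hφ : IsReduction φ)
    (p : L) (hp : p < 1) (b : L) :
    (PhiDeltaPrimaryTo φ δ b p ↔
      (mlResidual p b ≤ δ p ∨ mlResidual p b = mlResidual (φ p) b)) ∧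
    (PhiDeltaPrimaryTo φ δ b p ↔
      ∀ r : L, CompleteLattice.IsCompactElement r → r * b ≤ p → ¬ r * b ≤ φ p →
        r ≤ δ p) := by
  constructor
  · constructor
    · intro h
      by_cases hc : mlResidual p b ≤ mlResidual (φ p) b
      · right
        apply le_antisymm hc
        apply sSup_le_sSup
        intro x hx
        exact le_trans hx (hφ p)
      · left
        apply h
        · exact (ml_le_residual_iff p b _).mp le_rfl
        · intro hle
          exact hc ((ml_le_residual_iff (φ p) b _).mpr hle)
    · rintro (h | h) x hxb hxφ
      · exact le_trans ((ml_le_residual_iff p b x).mpr hxb) h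
      · exfalso
        apply hxφ
        have : x ≤ mlResidual (φ p) b := h ▸ (ml_le_residual_iff p b x).mpr hxb
        exact (ml_le_residual_iff (φ p) b x).mp this
  · constructor
    · intro h r _ hrb hrφ; exact h r hrb hrφ
    · intro h x hxb hxφ
      obtain ⟨s, hsc, hss⟩ := MultiplicativeLattice.compactly_generated x
      -- find a compact y₀ ∈ s with y₀ * b ≰ φ p
      have hx' : x * b = ⨆ y ∈ s, y * b := by rw [← hss, ml_sSup_mul]
      have : ¬ ∀ y ∈ s, y * b ≤ φ p := by
        intro hall
        apply hxφ
        rw [hx']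
        exact iSup_le fun y => iSup_le fun hy => hall y hy
      push_neg at this
      obtain ⟨y₀, hy₀s, hy₀⟩ := this
      have hxδ : ∀ y ∈ s, y ≤ δ p := by
        intro y hys
        have hyx : y ≤ x := hss ▸ le_sSup hys
        have hy₀x : y₀ ≤ x := hss ▸ le_sSup hy₀s
        have hr : (y ⊔ y₀) ≤ δ p := by
          apply h (y ⊔ y₀)
          · exact ml_compact_sup (hsc y hys) (hsc y₀ hy₀s)
          · rw [ml_sup_mul]
            exact sup_le (le_trans (ml_mul_mono_left hyx b) hxb)
              (le_trans (ml_mul_mono_left hy₀x b) hxb)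
          · intro hle
            apply hy₀
            calc y₀ * b ≤ (y ⊔ y₀) * b := ml_mul_mono_left le_sup_right b
              _ ≤ φ p := hle
        exact le_trans le_sup_left hr
      calc x = sSup s := hss.symm
        _ ≤ δ p := sSup_le hxδ
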